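/- arXiv:2110.07499 — 3 statements merged into one kernel-verified Lean document; each statement's English description precedes it below -/
import Mathlib

section
/- Let Y and Z be real random variables on a common probability space such that P(|Y| > x) > 0 for all x > 0 and, for every ε > 0, P(|Z| > εx) = o(P(|Y| > x)) as x → ∞. Then for every ε > 0: (a) P( |Z|/|Y| > ε | |Y| > x ) → 0 as x → ∞; and (b) P( | |Y|/|Y+Z| − 1 | > ε | |Y| > x ) → 0 as x → ∞ (with the convention that the event includes Y + Z = 0). -/
open MeasureTheory ProbabilityTheory Filter Topology
open scoped ENNReal

private lemma aux_tendsto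
    {Ω : Type*} [MeasurableSpace Ω] (P : Measure Ω) [IsProbabilityMeasure P]
    (Y Z : Ω → ℝ) {δ : ℝ}
    (hZY : Tendsto (fun x : ℝ => (P {ω | |Z ω| > δ * x}).toReal / (P {ω | |Y ω| > x}).toReal)
        atTop (𝓝 0))
    (A : Set Ω)
    (hA : ∀ x : ℝ, 0 < x → ∀ ω ∈ A, |Y ω| > x → |Z ω| > δ * x) :
    Tendsto (fun x : ℝ => (P (A ∩ {ω | |Y ω| > x})).toReal / (P {ω | |Y ω| > x}).toReal)
      atTop (𝓝 0) := by
  apply squeeze_zero' (Eventually.of_forall fun x => by positivity) ?_ hZY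
  filter_upwards [eventually_gt_atTop (0 : ℝ)] with x hx
  have hsub : A ∩ {ω | |Y ω| > x} ⊆ {ω | |Z ω| > δ * x} :=
    fun ω hω => hA x hx ω hω.1 hω.2
  have hnum : (P (A ∩ {ω | |Y ω| > x})).toReal ≤ (P {ω | |Z ω| > δ * x}).toReal :=
    ENNReal.toReal_mono (measure_ne_top _ _) (measure_mono hsub)
  gcongr

/-- if `P(|Z| > εx) = o(P(|Y| > x))` for every `ε > 0`, then conditionally
on `|Y| > x`, `Z/|Y| → 0` and `|Y|/|Y+Z| → 1` in probability as `x → ∞` (the exceptional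
event in (b) includes `Y + Z = 0` by convention). -/
theorem conditional_negligibility
    {Ω : Type*} [MeasurableSpace Ω] (P : Measure Ω) [IsProbabilityMeasure P]
    (Y Z : Ω → ℝ) (hY : Measurable Y) (hZ : Measurable Z)
    (hYpos : ∀ x : ℝ, 0 < x → 0 < P {ω | |Y ω| > x})
    (hZY : ∀ ε : ℝ, 0 < ε →
      Tendsto (fun x : ℝ => (P {ω | |Z ω| > ε * x}).toReal / (P {ω | |Y ω| > x}).toReal)
        atTop (𝓝 0)) :
    ∀ ε : ℝ, 0 < ε →
      -- (a) P( |Z|/|Y| > ε  |  |Y| > x ) → 0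
      Tendsto (fun x : ℝ =>
          (P ({ω | |Z ω| / |Y ω| > ε} ∩ {ω | |Y ω| > x})).toReal
            / (P {ω | |Y ω| > x}).toReal)
        atTop (𝓝 0) ∧
      -- (b) P( | |Y|/|Y+Z| − 1 | > ε  |  |Y| > x ) → 0, the event including Y + Z = 0
      Tendsto (fun x : ℝ =>
          (P ({ω | Y ω + Z ω = 0 ∨ abs (abs (Y ω) / abs (Y ω + Z ω) - 1) > ε} ∩ {ω | |Y ω| > x})).toReal
            / (P {ω | |Y ω| > x}).toReal)
        atTop (𝓝 0) := by
  intro ε hε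
  constructor
  · refine aux_tendsto P Y Z (hZY ε hε) _ ?_
    intro x hx ω hω hωY
    have hYω : (0 : ℝ) < |Y ω| := lt_trans hx hωY
    have h1 : ε * |Y ω| < |Z ω| := (lt_div_iff₀ hYω).mp hω  -- hω : ε < |Z ω|/|Y ω|
    calc ε * x < ε * |Y ω| := by nlinarith
      _ < |Z ω| := h1
  · set δ := ε / (1 + ε) with hδdef
    have hδ : 0 < δ := div_pos hε (by linarith)
    refine aux_tendsto P Y Z (hZY δ hδ) _ ?_
    intro x hx ω hω hωY
    have hYω : (0 : ℝ) < |Y ω| := lt_trans hx hωY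
    -- suffices |Z ω| > δ * |Y ω|
    have key : δ * |Y ω| < |Z ω| := by
      by_contra hcon
      push_neg at hcon
      -- |Z ω| ≤ δ |Y ω|, derive contradiction with hω
      have hδ1 : δ < 1 := by
        rw [hδdef, div_lt_one (by linarith)]; linarith
      have hYZ : |Y ω| - |Z ω| ≤ |Y ω + Z ω| := by
        have := abs_sub_abs_le_abs_sub (Y ω) (-(Z ω))
        simp only [abs_neg, sub_neg_eq_add] at this
        linarith
      have hpos : 0 < |Y ω + Z ω| := by nlinarith
      have hne : Y ω + Z ω ≠ 0 := abs_pos.mp hpos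
      rcases hω with h0 | h0
      · exact hne h0
      -- bound | |Y|/|Y+Z| - 1 | ≤ ε
      have hdiff : abs (abs (Y ω) - abs (Y ω + Z ω)) ≤ |Z ω| := by
        have h1 := abs_abs_sub_abs_le_abs_sub (Y ω) (Y ω + Z ω)
        have h2 : |Y ω - (Y ω + Z ω)| = |Z ω| := by
          rw [show Y ω - (Y ω + Z ω) = -(Z ω) by ring, abs_neg]
        rw [h2] at h1
        exact h1
      have hfe : δ * (1 + ε) = ε := by
        rw [hδdef]; field_simp
      have habs : abs (abs (Y ω) / abs (Y ω + Z ω) - 1) ≤ ε := by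
        have hne' : abs (Y ω + Z ω) ≠ 0 := ne_of_gt hpos
        rw [show abs (Y ω) / abs (Y ω + Z ω) - 1
              = (abs (Y ω) - abs (Y ω + Z ω)) / abs (Y ω + Z ω) by field_simp,
          abs_div, abs_of_pos hpos, div_le_iff₀ hpos]
        nlinarith [hdiff, hcon, hYZ, hpos, hε, hδ, hfe, abs_nonneg (Z ω)]
      exact absurd h0 (not_lt.mpr habs)
    calc δ * x < δ * |Y ω| := by nlinarith
      _ < |Z ω| := key
end

section
/- Let p ∈ ℕ with p ≥ 2 and β ∈ (0, 1 − 1/p) (equivalently β_p := pβ − p + 1 < 0). Set q_{β,p} = min{ q ∈ ℕ : qβ − q + 1 < 0 } and D_{β,p} = Σ_{s=q_{β,p}}^{p} binom(p,s) (−1)^{p−s} (s(1−β) − 1)^{p−1}. Then 0 < D_{β,p} < 1. -/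
open Finset

noncomputable def relu (y : ℝ) : ℝ := max y 0

noncomputable def altS (φ : ℝ → ℝ) (k e : ℕ) (x : ℝ) : ℝ :=
  ∑ s ∈ Finset.range (k+1), (-1:ℝ)^s * (k.choose s : ℝ) * (φ (x - s))^e

lemma altS_pascal (φ : ℝ → ℝ) (k e : ℕ) (x : ℝ) :
    altS φ (k+1) e x = altS φ k e x - altS φ k e (x-1) := by
  unfold altS
  rw [Finset.sum_range_succ' (fun s => (-1:ℝ)^s * ((k+1).choose s : ℝ) * (φ (x - s))^e) (k+1)]
  rw [Finset.sum_range_succ' (fun s => (-1:ℝ)^s * (k.choose s : ℝ) * (φ (x - s))^e) k]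
  have hext : ∑ i ∈ Finset.range k, (-1:ℝ)^(i+1) * (k.choose (i+1) : ℝ) * (φ (x - ((i:ℕ)+1:ℕ)))^e
      = ∑ i ∈ Finset.range (k+1), (-1:ℝ)^(i+1) * (k.choose (i+1) : ℝ) * (φ (x - ((i:ℕ)+1:ℕ)))^e := by
    rw [Finset.sum_range_succ]
    simp [Nat.choose_succ_self]
  rw [hext]
  have h2 : ∑ i ∈ Finset.range (k+1), (-1:ℝ)^i * (k.choose i : ℝ) * (φ (x - 1 - i))^e
      = ∑ i ∈ Finset.range (k+1), (-1:ℝ)^i * (k.choose i : ℝ) * (φ (x - ((i:ℕ)+1:ℕ)))^e := by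
    apply Finset.sum_congr rfl; intro i _
    congr 2
    push_cast; ring
  rw [h2]
  have hmain : ∑ i ∈ Finset.range (k+1), (-1:ℝ)^(i+1) * (((k+1)).choose (i+1) : ℝ) * (φ (x - ((i:ℕ)+1:ℕ)))^e
      = ∑ i ∈ Finset.range (k+1), (-1:ℝ)^(i+1) * (k.choose (i+1) : ℝ) * (φ (x - ((i:ℕ)+1:ℕ)))^e
        - ∑ i ∈ Finset.range (k+1), (-1:ℝ)^i * (k.choose i : ℝ) * (φ (x - ((i:ℕ)+1:ℕ)))^e := by
    rw [← Finset.sum_sub_distrib]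
    apply Finset.sum_congr rfl; intro i _
    push_cast [Nat.choose_succ_succ]
    ring
  simp only [pow_zero, Nat.choose_zero_right, Nat.cast_one, one_mul, Nat.cast_zero, sub_zero]
  linarith [hmain]

lemma altS_rec (φ : ℝ → ℝ) (k e : ℕ) (hφ : ∀ y : ℝ, φ y ^ (e+1) = y * φ y ^ e) (x : ℝ) :
    altS φ (k+1) (e+1) x = x * altS φ k e x + ((k:ℝ)+1-x) * altS φ k e (x-1) := by
  unfold altS
  have hL : ∑ s ∈ Finset.range (k+2), (-1:ℝ)^s * ((k+1).choose s : ℝ) * (φ (x - s))^(e+1)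
      = ∑ s ∈ Finset.range (k+2), (-1:ℝ)^s * ((k+1).choose s : ℝ) * ((x - s) * (φ (x - s))^e) := by
    apply Finset.sum_congr rfl; intro s _; rw [hφ]
  rw [hL, Finset.mul_sum, Finset.mul_sum]
  rw [Finset.sum_range_succ' (fun s => (-1:ℝ)^s * ((k+1).choose s : ℝ) * ((x - s) * (φ (x - s))^e)) (k+1)]
  rw [Finset.sum_range_succ' (fun s => x * ((-1:ℝ)^s * (k.choose s : ℝ) * (φ (x - s))^e)) k]
  have hext : ∑ i ∈ Finset.range k, x * ((-1:ℝ)^(i+1) * (k.choose (i+1) : ℝ) * (φ (x - ((i:ℕ)+1:ℕ)))^e)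
      = ∑ i ∈ Finset.range (k+1), x * ((-1:ℝ)^(i+1) * (k.choose (i+1) : ℝ) * (φ (x - ((i:ℕ)+1:ℕ)))^e) := by
    rw [Finset.sum_range_succ]
    simp [Nat.choose_succ_self]
  rw [hext]
  have h2 : ∑ i ∈ Finset.range (k+1), ((k:ℝ)+1-x) * ((-1:ℝ)^i * (k.choose i : ℝ) * (φ (x - 1 - i))^e)
      = ∑ i ∈ Finset.range (k+1), ((k:ℝ)+1-x) * ((-1:ℝ)^i * (k.choose i : ℝ) * (φ (x - ((i:ℕ)+1:ℕ)))^e) := by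
    apply Finset.sum_congr rfl; intro i _
    congr 3
    push_cast; ring
  rw [h2]
  have hmain : ∑ i ∈ Finset.range (k+1), (-1:ℝ)^(i+1) * (((k+1)).choose (i+1) : ℝ) * ((x - ((i:ℕ)+1:ℕ)) * (φ (x - ((i:ℕ)+1:ℕ)))^e)
      = ∑ i ∈ Finset.range (k+1), (x * ((-1:ℝ)^(i+1) * (k.choose (i+1) : ℝ) * (φ (x - ((i:ℕ)+1:ℕ)))^e)
          + ((k:ℝ)+1-x) * ((-1:ℝ)^i * (k.choose i : ℝ) * (φ (x - ((i:ℕ)+1:ℕ)))^e)) := by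
    apply Finset.sum_congr rfl; intro i _
    have hA : (((k+1).choose (i+1) : ℕ) : ℝ) = (k.choose i : ℝ) + (k.choose (i+1) : ℝ) := by
      exact_mod_cast congrArg (Nat.cast : ℕ → ℝ) (Nat.choose_succ_succ k i)
    have hB : (((i:ℝ))+1) * (((k+1).choose (i+1) : ℕ) : ℝ) = (((k:ℝ))+1) * ((k.choose i : ℕ) : ℝ) := by
      have h' : (k+1) * (k.choose i) = ((k+1).choose (i+1)) * (i+1) := Nat.add_one_mul_choose_eq k i
      have hc := congrArg (Nat.cast : ℕ → ℝ) h'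
      push_cast at hc
      linarith [hc]
    push_cast
    push_cast at hA hB
    linear_combination ((-1:ℝ)^(i+1) * (φ (x - ((i:ℝ)+1)))^e) * (x * hA - hB)
  rw [hmain, Finset.sum_add_distrib]
  simp only [pow_zero, Nat.choose_zero_right, Nat.cast_one, one_mul, Nat.cast_zero, sub_zero]
  ring

lemma relu_pow_succ (e : ℕ) (he : 1 ≤ e) (y : ℝ) : relu y ^ (e+1) = y * relu y ^ e := by
  unfold relu
  rcases le_or_gt y 0 with h | h
  · rw [max_eq_right h, zero_pow (by omega : e + 1 ≠ 0), zero_pow (by omega : e ≠ 0), mul_zero]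
  · rw [max_eq_left h.le, pow_succ']

lemma altS_id_fact (k : ℕ) (x : ℝ) : altS (fun y => y) k k x = (k.factorial : ℝ) := by
  induction k generalizing x with
  | zero => simp [altS]
  | succ k ih =>
    rw [altS_rec (fun y => y) k k (fun y => by rw [pow_succ']) x, ih x, ih (x-1)]
    push_cast [Nat.factorial_succ]
    ring

lemma altS_id_zero (k : ℕ) (x : ℝ) : altS (fun y => y) (k+1) k x = 0 := by
  rw [altS_pascal, altS_id_fact, altS_id_fact, sub_self]

lemma altS_relu_nonpos (k e : ℕ) (he : 1 ≤ e) (x : ℝ) (hx : x ≤ 0) : altS relu k e x = 0 := by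
  unfold altS relu
  apply Finset.sum_eq_zero
  intro s _
  have h1 : x - (s:ℝ) ≤ 0 := by
    have : (0:ℝ) ≤ s := Nat.cast_nonneg s
    linarith
  rw [max_eq_right h1, zero_pow (by omega : e ≠ 0), mul_zero]

lemma altS_relu_eq_id (k e : ℕ) (x : ℝ) (hx : (k:ℝ) ≤ x) :
    altS relu k e x = altS (fun y => y) k e x := by
  unfold altS relu
  apply Finset.sum_congr rfl
  intro s hs
  have h1 : (s:ℝ) ≤ k := by
    have := Finset.mem_range.1 hs
    exact_mod_cast Nat.le_of_lt_succ this
  rw [max_eq_left (by linarith : (0:ℝ) ≤ x - s)]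

lemma altS_relu_one (y : ℝ) : altS relu 1 1 y = max y 0 - max (y-1) 0 := by
  simp [altS, Finset.sum_range_succ, relu]
  ring

lemma Bfacts (m : ℕ) : ∀ y : ℝ,
    (0 ≤ altS relu (m+1) (m+1) y) ∧ (altS relu (m+1) (m+1) y ≤ ((m+1).factorial : ℝ)) ∧
    (0 < y → 0 < altS relu (m+1) (m+1) y) ∧
    (((m:ℝ)+1) ≤ y → altS relu (m+1) (m+1) y = ((m+1).factorial : ℝ)) := by
  induction m with
  | zero =>
    intro y
    rw [altS_relu_one]
    have hf : (((0+1).factorial : ℕ) : ℝ) = 1 := by norm_num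
    rw [hf]
    refine ⟨?_, ?_, ?_, ?_⟩
    · have := max_le_max (show y - 1 ≤ y by linarith) (le_refl (0:ℝ))
      linarith
    · rcases le_or_gt y 1 with h1 | h1
      · have h2 : max y 0 ≤ 1 := max_le h1 one_pos.le
        have h3 : (0:ℝ) ≤ max (y-1) 0 := le_max_right _ _
        linarith
      · rw [max_eq_left (by linarith : (0:ℝ) ≤ y), max_eq_left (by linarith : (0:ℝ) ≤ y - 1)]
        linarith
    · intro hy
      rcases le_or_gt y 1 with h1 | h1
      · rw [max_eq_left hy.le, max_eq_right (by linarith : y - 1 ≤ 0)]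
        linarith
      · rw [max_eq_left (by linarith : (0:ℝ) ≤ y), max_eq_left (by linarith : (0:ℝ) ≤ y - 1)]
        linarith
    · intro hy
      norm_num at hy
      rw [max_eq_left (by linarith : (0:ℝ) ≤ y), max_eq_left (by linarith : (0:ℝ) ≤ y - 1)]
      ring
  | succ m ih =>
    intro y
    have hrec : altS relu (m+1+1) (m+1+1) y
        = y * altS relu (m+1) (m+1) y + (((m+1):ℝ)+1-y) * altS relu (m+1) (m+1) (y-1) := by
      have := altS_rec relu (m+1) (m+1) (fun z => relu_pow_succ (m+1) (by omega) z) y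
      push_cast at this ⊢
      convert this using 3 <;> push_cast <;> ring
    have hfac : (((m+1+1).factorial : ℕ) : ℝ) = (((m:ℝ)+2)) * ((m+1).factorial : ℝ) := by
      push_cast [Nat.factorial_succ]
      ring
    rcases le_or_gt y 0 with h0 | h0
    · rw [altS_relu_nonpos (m+1+1) (m+1+1) (by omega) y h0]
      refine ⟨le_refl _, by positivity, fun h => by linarith, fun h => by
        exfalso; push_cast at h; have hm0 : (0:ℝ) ≤ (m:ℝ) := Nat.cast_nonneg m; linarith⟩
    · rcases le_or_gt ((m:ℝ)+2) y with hge | hlt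
      · have h1 := (ih y).2.2.2 (by linarith)
        have h2 := (ih (y-1)).2.2.2 (by linarith)
        have heq : altS relu (m+1+1) (m+1+1) y = ((m+1+1).factorial : ℝ) := by
          rw [hrec, h1, h2, hfac]; push_cast; ring
        refine ⟨by rw [heq]; positivity, le_of_eq heq, fun _ => by rw [heq]; positivity,
          fun _ => heq⟩
      · obtain ⟨hy0, hy2, hypos, _⟩ := ih y
        obtain ⟨hz0, hz2, hzpos, _⟩ := ih (y-1)
        have hyB := hypos h0
        have hc2 : (0:ℝ) < (m:ℝ)+2-y := by linarith
        constructor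
        · rw [hrec]; push_cast; nlinarith
        constructor
        · rw [hrec, hfac]; push_cast; nlinarith
        refine ⟨fun _ => by rw [hrec]; push_cast; nlinarith, fun h => by push_cast at h; linarith⟩

lemma Tfacts (n : ℕ) : ∀ x : ℝ,
    (0 ≤ altS relu (n+2) (n+1) x) ∧ (0 < x → x < (n:ℝ)+2 → 0 < altS relu (n+2) (n+1) x) := by
  induction n with
  | zero =>
    intro x
    have hT : altS relu 2 1 x = max x 0 - 2 * max (x-1) 0 + max (x-2) 0 := by
      simp [altS, Finset.sum_range_succ, relu]
      ring
    rw [hT]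
    norm_num
    rcases le_or_gt x 1 with h1 | h1
    · rw [max_eq_right (by linarith : x - 1 ≤ 0), max_eq_right (by linarith : x - 2 ≤ 0)]
      refine ⟨by simp [le_max_right], fun hx _ => by rw [max_eq_left hx.le]; linarith⟩
    · rcases le_or_gt x 2 with h2 | h2
      · rw [max_eq_left (by linarith : (0:ℝ) ≤ x), max_eq_left (by linarith : (0:ℝ) ≤ x - 1),
          max_eq_right (by linarith : x - 2 ≤ 0)]
        refine ⟨by linarith, fun _ hx => by linarith⟩
      · rw [max_eq_left (by linarith : (0:ℝ) ≤ x), max_eq_left (by linarith : (0:ℝ) ≤ x - 1),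
          max_eq_left (by linarith : (0:ℝ) ≤ x - 2)]
        refine ⟨by linarith, fun _ hx => by linarith⟩
  | succ n ih =>
    intro x
    have hrec : altS relu (n+1+2) (n+1+1) x
        = x * altS relu (n+2) (n+1) x + (((n+2):ℝ)+1-x) * altS relu (n+2) (n+1) (x-1) := by
      have := altS_rec relu (n+2) (n+1) (fun z => relu_pow_succ (n+1) (by omega) z) x
      convert this using 3 <;> push_cast <;> ring
    rcases le_or_gt x 0 with h0 | h0
    · rw [altS_relu_nonpos (n+1+2) (n+1+1) (by omega) x h0]
      exact ⟨le_refl _, fun h _ => by linarith⟩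
    · rcases le_or_gt ((n:ℝ)+3) x with hge | hlt
      · have hz : altS relu (n+1+2) (n+1+1) x = 0 := by
          rw [altS_relu_eq_id (n+1+2) (n+1+1) x (by push_cast; linarith)]
          exact altS_id_zero (n+1+1) x
        rw [hz]
        exact ⟨le_refl _, fun _ h => by push_cast at h; linarith⟩
      · obtain ⟨hy0, hypos⟩ := ih x
        obtain ⟨hz0, hzpos⟩ := ih (x-1)
        have hc2 : (0:ℝ) < (n:ℝ)+3-x := by linarith
        constructor
        · rw [hrec]; push_cast; nlinarith
        · intro _ _
          rw [hrec]
          rcases lt_or_ge x ((n:ℝ)+2) with hx2 | hx2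
          · have := hypos h0 hx2
            push_cast
            nlinarith
          · have hx1 : (1:ℝ) < x := by
              have hn0 : (0:ℝ) ≤ (n:ℝ) := Nat.cast_nonneg n
              linarith
            have := hzpos (by linarith) (by linarith)
            push_cast
            nlinarith

lemma hasDerivAt_reluPow (n : ℕ) (hn : 1 ≤ n) (c x : ℝ) :
    HasDerivAt (fun t => max (t - c) 0 ^ (n+1)) (((n:ℝ)+1) * max (x - c) 0 ^ n) x := by
  rcases lt_trichotomy x c with h | h | h
  · have hzero : HasDerivAt (fun _ : ℝ => (0:ℝ)) 0 x := hasDerivAt_const x 0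
    have hev : (fun t : ℝ => max (t - c) 0 ^ (n+1)) =ᶠ[nhds x] fun _ => (0:ℝ) := by
      filter_upwards [Iio_mem_nhds h] with t ht
      rw [max_eq_right (by simp at ht; linarith : t - c ≤ 0), zero_pow (by omega : n + 1 ≠ 0)]
    have := hzero.congr_of_eventuallyEq hev
    have hval : ((n:ℝ)+1) * max (x - c) 0 ^ n = 0 := by
      rw [max_eq_right (by linarith : x - c ≤ 0), zero_pow (by omega : n ≠ 0), mul_zero]
    rw [hval]
    exact this
  · subst h
    rw [hasDerivAt_iff_isLittleO]
    simp only [sub_self, max_self, zero_pow (by omega : n + 1 ≠ 0), zero_pow (by omega : n ≠ 0),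
      mul_zero, smul_zero, sub_zero, zero_sub]
    rw [Asymptotics.isLittleO_iff]
    intro C hC
    rw [Metric.eventually_nhds_iff]
    refine ⟨min 1 C, by positivity, fun {t} ht => ?_⟩
    rw [Real.dist_eq] at ht
    have h1 : |t - x| < 1 := lt_of_lt_of_le ht (min_le_left _ _)
    have h2 : |t - x| < C := lt_of_lt_of_le ht (min_le_right _ _)
    have h3 : max (t - x) 0 ≤ |t - x| := max_le (le_abs_self _) (abs_nonneg _)
    have h4 : (0:ℝ) ≤ max (t - x) 0 := le_max_right _ _
    have h5 : max (t - x) 0 ^ (n+1) ≤ |t - x| ^ (n+1) := pow_le_pow_left₀ h4 h3 (n+1)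
    have h6 : |t - x| ^ (n+1) ≤ |t - x| ^ 2 :=
      pow_le_pow_of_le_one (abs_nonneg _) h1.le (by omega)
    have h7 : |t - x| ^ 2 ≤ C * |t - x| := by
      have := mul_le_mul_of_nonneg_right h2.le (abs_nonneg (t - x))
      nlinarith [abs_nonneg (t-x)]
    rw [Real.norm_eq_abs, Real.norm_eq_abs]
    rw [abs_of_nonneg (pow_nonneg h4 _)]
    calc max (t - x) 0 ^ (n+1) ≤ |t - x| ^ (n+1) := h5
      _ ≤ |t - x| ^ 2 := h6
      _ ≤ C * |t - x| := h7
  · have hpoly : HasDerivAt (fun t : ℝ => (t - c) ^ (n+1)) (((n:ℝ)+1) * (x - c) ^ n) x := by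
      have := (hasDerivAt_id x).sub_const c
      have hp := this.fun_pow (n+1)
      simp only [Nat.add_sub_cancel, mul_one, id_eq] at hp
      refine hp.congr_deriv ?_
      push_cast
      ring
    have hev : (fun t : ℝ => max (t - c) 0 ^ (n+1)) =ᶠ[nhds x] fun t => (t - c) ^ (n+1) := by
      filter_upwards [Ioi_mem_nhds h] with t ht
      rw [max_eq_left (by simp at ht; linarith : (0:ℝ) ≤ t - c)]
    have := hpoly.congr_of_eventuallyEq hev
    rw [max_eq_left (by linarith : (0:ℝ) ≤ x - c)]
    exact this

lemma continuous_altS_relu (k e : ℕ) : Continuous (fun t : ℝ => altS relu k e t) := by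
  unfold altS relu
  apply continuous_finset_sum
  intro s _
  exact (continuous_const.mul (((continuous_id.sub continuous_const).max continuous_const).pow e))

lemma Ble (m : ℕ) : ∀ y : ℝ, altS relu (m+1) (m+1) y ≤ max y 0 ^ (m+1) := by
  induction m with
  | zero =>
    intro y
    rw [altS_relu_one, pow_one]
    have : (0:ℝ) ≤ max (y-1) 0 := le_max_right _ _
    linarith
  | succ m ih =>
    intro y
    -- FTC for F t = altS relu (m+1) (m+2) t with derivative (m+2) * altS relu (m+1) (m+1) t
    have hderiv : ∀ t ∈ Set.uIcc (y-1) y,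
        HasDerivAt (fun u => altS relu (m+1) (m+2) u) (((m:ℝ)+2) * altS relu (m+1) (m+1) t) t := by
      intro t _
      have hsum : HasDerivAt
          (fun u => ∑ s ∈ Finset.range (m+2), (-1:ℝ)^s * ((m+1).choose s : ℝ) * max (u - (s:ℝ)) 0 ^ (m+2))
          (∑ s ∈ Finset.range (m+2), (-1:ℝ)^s * ((m+1).choose s : ℝ) * ((((m+1:ℕ):ℝ)+1) * max (t - (s:ℝ)) 0 ^ (m+1))) t := by
        apply HasDerivAt.fun_sum
        intro s _
        exact HasDerivAt.const_mul _ (hasDerivAt_reluPow (m+1) (by omega) (s:ℝ) t)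
      have h1 : (fun u => altS relu (m+1) (m+2) u)
          = (fun u => ∑ s ∈ Finset.range (m+2), (-1:ℝ)^s * ((m+1).choose s : ℝ) * max (u - (s:ℝ)) 0 ^ (m+2)) := by
        funext u; simp [altS, relu]
      rw [h1]
      convert hsum using 1
      simp only [altS, relu, Finset.mul_sum]
      apply Finset.sum_congr rfl
      intro s _
      push_cast
      ring
    have hcont : Continuous fun t : ℝ => ((m:ℝ)+2) * altS relu (m+1) (m+1) t :=
      continuous_const.mul (continuous_altS_relu (m+1) (m+1))
    have hint : IntervalIntegrable (fun t : ℝ => ((m:ℝ)+2) * altS relu (m+1) (m+1) t)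
        MeasureTheory.volume (y-1) y := hcont.intervalIntegrable _ _
    have hFTC1 : ∫ t in (y-1)..y, ((m:ℝ)+2) * altS relu (m+1) (m+1) t
        = altS relu (m+1) (m+2) y - altS relu (m+1) (m+2) (y-1) :=
      intervalIntegral.integral_eq_sub_of_hasDerivAt hderiv hint
    -- FTC for the bound function
    have hderiv2 : ∀ t ∈ Set.uIcc (y-1) y,
        HasDerivAt (fun u : ℝ => max u 0 ^ (m+2)) (((m:ℝ)+2) * max t 0 ^ (m+1)) t := by
      intro t _
      have := hasDerivAt_reluPow (m+1) (by omega) 0 t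
      simp only [sub_zero] at this
      convert this using 2 <;> push_cast <;> ring
    have hcont2 : Continuous fun t : ℝ => ((m:ℝ)+2) * max t 0 ^ (m+1) :=
      continuous_const.mul ((continuous_id.max continuous_const).pow _)
    have hint2 : IntervalIntegrable (fun t : ℝ => ((m:ℝ)+2) * max t 0 ^ (m+1))
        MeasureTheory.volume (y-1) y := hcont2.intervalIntegrable _ _
    have hFTC2 : ∫ t in (y-1)..y, ((m:ℝ)+2) * max t 0 ^ (m+1)
        = max y 0 ^ (m+2) - max (y-1) 0 ^ (m+2) :=
      intervalIntegral.integral_eq_sub_of_hasDerivAt hderiv2 hint2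
    have hmono : ∫ t in (y-1)..y, ((m:ℝ)+2) * altS relu (m+1) (m+1) t
        ≤ ∫ t in (y-1)..y, ((m:ℝ)+2) * max t 0 ^ (m+1) := by
      apply intervalIntegral.integral_mono_on (by linarith : y - 1 ≤ y) hint hint2
      intro t _
      have := ih t
      nlinarith [ih t]
    have hkey : altS relu (m+1+1) (m+1+1) y = altS relu (m+1) (m+2) y - altS relu (m+1) (m+2) (y-1) := by
      have := altS_pascal relu (m+1) (m+2) y
      convert this using 2
    have hfin : max (y-1) 0 ^ (m+2) ≥ 0 := pow_nonneg (le_max_right _ _) _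
    have : altS relu (m+1+1) (m+1+1) y ≤ max y 0 ^ (m+2) - max (y-1) 0 ^ (m+2) := by
      rw [hkey, ← hFTC1, ← hFTC2]
      exact hmono
    calc altS relu (m+1+1) (m+1+1) y ≤ max y 0 ^ (m+2) - max (y-1) 0 ^ (m+2) := this
      _ ≤ max y 0 ^ (m+2) := by linarith
      _ = max y 0 ^ (m+1+1) := by norm_num


/-- for `p ≥ 2` and `β ∈ (0, 1 − 1/p)` (i.e. `β_p = pβ − p + 1 < 0`), with
`q_{β,p} = min{q ≥ 1 : qβ − q + 1 < 0}`, the constant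
`D_{β,p} = Σ_{s=q_{β,p}}^p C(p,s) (−1)^{p−s} (s(1−β) − 1)^{p−1}` satisfies `0 < D_{β,p} < 1`. -/
theorem D_beta_p_mem_Ioo
    (p : ℕ) (hp : 2 ≤ p) (β : ℝ) (hβ : β ∈ Set.Ioo (0 : ℝ) (1 - 1 / p))
    (q : ℕ) (hq1 : 1 ≤ q) (hqlt : (q : ℝ) * β - q + 1 < 0)
    (hqmin : ∀ q' : ℕ, 1 ≤ q' → (q' : ℝ) * β - q' + 1 < 0 → q ≤ q') :
    (0 : ℝ) < ∑ s ∈ Finset.Icc q p,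
        (p.choose s : ℝ) * (-1 : ℝ) ^ (p - s) * ((s : ℝ) * (1 - β) - 1) ^ (p - 1) ∧
      ∑ s ∈ Finset.Icc q p,
        (p.choose s : ℝ) * (-1 : ℝ) ^ (p - s) * ((s : ℝ) * (1 - β) - 1) ^ (p - 1) < 1 := by
  obtain ⟨n, rfl⟩ : ∃ n, p = n + 2 := ⟨p - 2, by omega⟩
  obtain ⟨hβ0, hβ1⟩ := hβ
  push_cast at hβ1
  have hn2 : (0:ℝ) < (n:ℝ)+2 := by positivity
  set a : ℝ := 1 - β with ha
  have hinv : (0:ℝ) < 1/((n:ℝ)+2) := by positivity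
  have ha0 : 0 < a := by rw [ha]; linarith
  have ha1 : a < 1 := by rw [ha]; linarith
  have hpa : 1/((n:ℝ)+2) < a := by rw [ha]; linarith
  have hxa : a * (1/a) = 1 := mul_one_div_cancel ha0.ne'
  have hx1 : 1 < 1/a := by rw [lt_div_iff₀ ha0]; linarith
  have hone2 : ((n:ℝ)+2) * (1/((n:ℝ)+2)) = 1 := mul_one_div_cancel hn2.ne'
  have hxn : 1/a < (n:ℝ)+2 := by
    rw [div_lt_iff₀ ha0]
    nlinarith [mul_lt_mul_of_pos_left hpa hn2]
  have hqa : 1 < (q:ℝ) * a := by rw [ha]; nlinarith [hqlt]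
  have hsmax : ∀ s : ℕ, s < q → (0:ℝ) ≤ 1 - (s:ℝ) * a := by
    intro s hs
    by_contra hcon
    push_neg at hcon
    have hs1 : 1 ≤ s := by
      rcases Nat.eq_zero_or_pos s with h | h
      · exfalso; subst h; norm_num at hcon
      · exact h
    have hsb : (s:ℝ) * β - s + 1 < 0 := by rw [ha] at hcon; nlinarith
    exact absurd (hqmin s hs1 hsb) (by omega)
  have hqp : q ≤ n + 2 := hqmin (n+2) (by omega) (by push_cast; nlinarith)
  -- term-level abbreviations
  have e1 : a^(n+1) * altS relu (n+2) (n+1) (1/a)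
      = ∑ s ∈ Finset.range (n+2+1),
          (-1:ℝ)^s * ((n+2).choose s : ℝ) * (max (1 - (s:ℝ)*a) 0)^(n+1) := by
    unfold altS relu
    rw [Finset.mul_sum]
    apply Finset.sum_congr rfl
    intro s _
    have hm : a * max (1/a - (s:ℝ)) 0 = max (1 - (s:ℝ)*a) 0 := by
      rw [mul_max_of_nonneg _ _ ha0.le, mul_zero]
      congr 1
      rw [mul_sub, hxa]
      ring
    rw [← hm, mul_pow]
    ring
  have e2 : ∑ s ∈ Finset.range (n+2+1),
        (-1:ℝ)^s * ((n+2).choose s : ℝ) * (max (1 - (s:ℝ)*a) 0)^(n+1)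
      = ∑ s ∈ Finset.range q, (-1:ℝ)^s * ((n+2).choose s : ℝ) * (1 - (s:ℝ)*a)^(n+1) := by
    rw [Finset.range_eq_Ico,
      ← Finset.sum_Ico_consecutive _ (Nat.zero_le q) (by omega : q ≤ n+2+1)]
    have hhi : ∑ s ∈ Finset.Ico q (n+2+1),
        (-1:ℝ)^s * ((n+2).choose s : ℝ) * (max (1 - (s:ℝ)*a) 0)^(n+1) = 0 := by
      apply Finset.sum_eq_zero
      intro s hs
      have hqs : (q:ℝ) ≤ (s:ℝ) := by exact_mod_cast (Finset.mem_Ico.1 hs).1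
      have hsa : (q:ℝ)*a ≤ (s:ℝ)*a := mul_le_mul_of_nonneg_right hqs ha0.le
      rw [max_eq_right (by linarith : 1 - (s:ℝ)*a ≤ 0), zero_pow (by omega : n+1 ≠ 0), mul_zero]
    rw [hhi, add_zero]
    rw [Finset.range_eq_Ico]
    apply Finset.sum_congr rfl
    intro s hs
    have hsq : s < q := (Finset.mem_Ico.1 hs).2
    rw [max_eq_left (hsmax s hsq)]
  have e3 : ∑ s ∈ Finset.range (n+2+1),
      (-1:ℝ)^s * ((n+2).choose s : ℝ) * (1 - (s:ℝ)*a)^(n+1) = 0 := by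
    have h0 : a^(n+1) * altS (fun y => y) (n+2) (n+1) (1/a) = 0 := by
      rw [altS_id_zero (n+1) (1/a), mul_zero]
    rw [← h0]
    unfold altS
    rw [Finset.mul_sum]
    apply Finset.sum_congr rfl
    intro s _
    have hm : a * (1/a - (s:ℝ)) = 1 - (s:ℝ)*a := by rw [mul_sub, hxa]; ring
    rw [← hm, mul_pow]
    ring
  have esplit : (∑ s ∈ Finset.range q, (-1:ℝ)^s * ((n+2).choose s : ℝ) * (1 - (s:ℝ)*a)^(n+1))
      + (∑ s ∈ Finset.Ico q (n+2+1), (-1:ℝ)^s * ((n+2).choose s : ℝ) * (1 - (s:ℝ)*a)^(n+1))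
      = ∑ s ∈ Finset.range (n+2+1), (-1:ℝ)^s * ((n+2).choose s : ℝ) * (1 - (s:ℝ)*a)^(n+1) := by
    rw [Finset.range_eq_Ico, Finset.range_eq_Ico]
    exact Finset.sum_Ico_consecutive _ (Nat.zero_le q) (by omega : q ≤ n+2+1)
  have e5 : (∑ s ∈ Finset.Icc q (n+2),
        ((n+2).choose s : ℝ) * (-1 : ℝ) ^ (n+2-s) * ((s : ℝ) * a - 1) ^ (n+2-1))
      = - ∑ s ∈ Finset.Ico q (n+2+1),
          (-1:ℝ)^s * ((n+2).choose s : ℝ) * (1 - (s:ℝ)*a)^(n+1) := by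
    rw [← Finset.Ico_add_one_right_eq_Icc q (n+2), ← Finset.sum_neg_distrib]
    apply Finset.sum_congr rfl
    intro s hs
    have hsle : s ≤ n+2 := by
      have := (Finset.mem_Ico.1 hs).2; omega
    have h1 : ((-1:ℝ))^(n+2-s) * (-1)^s = (-1)^(n+2) := by
      rw [← pow_add, Nat.sub_add_cancel hsle]
    have h2 : ((-1:ℝ))^s * (-1)^s = 1 := by
      rw [← pow_add]; exact Even.neg_one_pow ⟨s, rfl⟩
    have hsgn : ((-1:ℝ))^(n+2-s) = (-1)^(n+2) * (-1)^s := by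
      linear_combination ((-1:ℝ))^s * h1 - ((-1:ℝ))^(n+2-s) * h2
    have hodd : ((-1:ℝ))^(n+2) * (-1)^(n+1) = -1 := by
      rw [← pow_add]
      exact Odd.neg_one_pow ⟨n+1, by ring⟩
    have hbase : ((s:ℝ) * a - 1) = -(1 - (s:ℝ)*a) := by ring
    have hnp : (-(1 - (s:ℝ)*a))^(n+1) = ((-1:ℝ))^(n+1) * (1 - (s:ℝ)*a)^(n+1) := by
      rw [neg_pow]
    rw [show n+2-1 = n+1 from rfl, hbase, hnp, hsgn]
    calc ((n+2).choose s : ℝ) * ((-1:ℝ)^(n+2) * (-1)^s) * ((-1:ℝ)^(n+1) * (1 - (s:ℝ)*a)^(n+1))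
        = ((-1:ℝ)^(n+2) * (-1)^(n+1)) * (((n+2).choose s : ℝ) * (-1)^s * (1 - (s:ℝ)*a)^(n+1)) := by
          ring
      _ = -((-1:ℝ)^s * ((n+2).choose s : ℝ) * (1 - (s:ℝ)*a)^(n+1)) := by rw [hodd]; ring
  have key : (∑ s ∈ Finset.Icc q (n+2),
        ((n+2).choose s : ℝ) * (-1 : ℝ) ^ (n+2-s) * ((s : ℝ) * a - 1) ^ (n+2-1))
      = a^(n+1) * altS relu (n+2) (n+1) (1/a) := by
    rw [e5, e1, e2]
    linarith [esplit, e3]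
  rw [key]
  constructor
  · exact mul_pos (pow_pos ha0 _) ((Tfacts n (1/a)).2 (by positivity) hxn)
  · have hsplit : altS relu (n+2) (n+1) (1/a)
        = altS relu (n+1) (n+1) (1/a) - altS relu (n+1) (n+1) (1/a - 1) :=
      altS_pascal relu (n+1) (n+1) (1/a)
    have h1 := Ble n (1/a)
    rw [max_eq_left (by positivity : (0:ℝ) ≤ 1/a)] at h1
    have h2 : 0 < altS relu (n+1) (n+1) (1/a - 1) := (Bfacts n (1/a - 1)).2.2.1 (by linarith)
    have hone : a^(n+1) * (1/a)^(n+1) = 1 := by rw [← mul_pow, hxa, one_pow]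
    have hpw : (0:ℝ) < a^(n+1) := pow_pos ha0 _
    rw [hsplit]
    nlinarith [mul_le_mul_of_nonneg_left h1 hpw.le, mul_pos hpw h2]
end

section
/- Let F be a distribution function on ℕ with probability mass function f(n) = F(n) − F(n−1). Let τ^{→} and τ^{←} be independent, where τ^{→} is a non-delayed renewal process with inter-renewal distribution F and τ^{←} = −τ' for an independent copy τ' of τ^{→} (so τ^{←} ⊆ −ℕ_0 with 0 ∈ τ^{←}). For d ∈ ℕ_0 and g ∈ ℕ define the random subset of ℤ given by T(d,g) = (d + τ^{→}) ∪ (−g + τ^{←}), and define the (σ-finite, infinite) measure Q on subsets of ℤ (with the cylinder σ-field generated by the events {t : k ∈ t}, k ∈ ℤ) by Q(A) = Σ_{d∈ℕ_0} Σ_{g∈ℕ} f(d+g) P( T(d,g) ∈ A ). Then Q is invariant under the shift B(t) = t + 1 = {k+1 : k ∈ t}, i.e. Q(B^{−1} A) = Q(A) for every measurable A. -/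
open MeasureTheory ProbabilityTheory Filter Topology
open scoped ENNReal

namespace TSRAux

abbrev I := ℕ ⊕ ℕ

def cyl (s : Finset I) (c : I → ℕ) : Set (I → ℕ) := {x | ∀ i ∈ s, x i = c i}

def cylSet : Set (Set (I → ℕ)) := {S | ∃ s c, S = cyl s c}

lemma isPiSystem_cylSet : IsPiSystem cylSet := by
  rintro S ⟨s, c, rfl⟩ S' ⟨s', c', rfl⟩ hne
  obtain ⟨x, hx, hx'⟩ := hne
  refine ⟨s ∪ s', fun i => if i ∈ s then c i else c' i, ?_⟩
  ext y
  simp only [cyl, Set.mem_inter_iff, Set.mem_setOf_eq, Finset.mem_union]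
  constructor
  · rintro ⟨h1, h2⟩ i hi
    by_cases h : i ∈ s
    · simp [h, h1 i h]
    · simp only [if_neg h]
      exact h2 i (hi.resolve_left h)
  · intro h
    constructor
    · intro i hi
      have := h i (Or.inl hi); rwa [if_pos hi] at this
    · intro i hi
      by_cases hs : i ∈ s
      · have := h i (Or.inl hs); rw [if_pos hs] at this
        rw [this, ← hx i hs, hx' i hi]
      · have := h i (Or.inr hi); rwa [if_neg hs] at this

lemma measurableSet_cyl (s : Finset I) (c : I → ℕ) : MeasurableSet (cyl s c) := by
  have : cyl s c = ⋂ i ∈ (s : Set I), (fun x : I → ℕ => x i) ⁻¹' {c i} := by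
    ext y; simp [cyl]
  rw [this]
  exact MeasurableSet.biInter s.countable_toSet
    (fun i _ => measurable_pi_apply i (measurableSet_singleton _))

lemma generateFrom_cylSet :
    (MeasurableSpace.pi : MeasurableSpace (I → ℕ)) = MeasurableSpace.generateFrom cylSet := by
  apply le_antisymm
  · refine iSup_le fun i => ?_
    have hm : @Measurable (I → ℕ) ℕ (MeasurableSpace.generateFrom cylSet) _
        (fun x : I → ℕ => x i) := by
      refine @measurable_to_countable' ℕ (I → ℕ) _ _
        (MeasurableSpace.generateFrom cylSet) _ fun n => ?_
      refine MeasurableSpace.measurableSet_generateFrom ⟨{i}, fun _ => n, ?_⟩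
      ext y; simp [cyl]
    exact measurable_iff_comap_le.1 hm
  · exact MeasurableSpace.generateFrom_le fun S hS => by
      obtain ⟨s, c, rfl⟩ := hS; exact measurableSet_cyl s c

/-- insert `g` at position `i₀`, reading other coordinates via `p`. -/
def ins (i₀ : I) (p : I → I) (g : ℕ) (x : I → ℕ) : I → ℕ :=
  fun i => if i = i₀ then g else x (p i)

lemma measurable_ins (i₀ : I) (p : I → I) (g : ℕ) : Measurable (ins i₀ p g) := by
  refine measurable_pi_lambda _ fun i => ?_
  unfold ins
  split_ifs
  · exact measurable_const
  · exact measurable_pi_apply _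

lemma ins_preimage_cyl (i₀ : I) (p u : I → I) (hu : ∀ i, i ≠ i₀ → u (p i) = i)
    (g : ℕ) (s : Finset I) (c : I → ℕ) :
    ins i₀ p g ⁻¹' cyl s c =
      if i₀ ∈ s ∧ g ≠ c i₀ then (∅ : Set (I → ℕ))
      else cyl ((s.erase i₀).image p) (fun j => c (u j)) := by
  split_ifs with h
  · obtain ⟨hi₀, hg⟩ := h
    ext x
    simp only [Set.mem_preimage, Set.mem_empty_iff_false, iff_false, cyl, Set.mem_setOf_eq]
    intro hx
    exact hg (by simpa [ins] using hx i₀ hi₀)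
  · push_neg at h
    ext x
    simp only [Set.mem_preimage, cyl, Set.mem_setOf_eq]
    constructor
    · intro hx j hj
      obtain ⟨i, hi, rfl⟩ := Finset.mem_image.1 hj
      have hine : i ≠ i₀ := Finset.ne_of_mem_erase hi
      have := hx i (Finset.mem_of_mem_erase hi)
      rw [ins, if_neg hine] at this
      rw [hu i hine, this]
    · intro hx i hi
      by_cases hii : i = i₀
      · subst hii
        rw [ins, if_pos rfl]
        exact h hi
      · rw [ins, if_neg hii]
        have := hx (p i) (Finset.mem_image_of_mem p (Finset.mem_erase.2 ⟨hii, hi⟩))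
        rwa [hu i hii] at this

lemma sum_smul_map_ins (ν : Measure (I → ℕ)) [IsProbabilityMeasure ν]
    (f : ℕ → ℝ≥0∞) (hf1 : ∑' n, f n = 1)
    (hcyl : ∀ s c, ν (cyl s c) = ∏ i ∈ s, f (c i))
    (i₀ : I) (p u : I → I) (hu : ∀ i, i ≠ i₀ → u (p i) = i) :
    Measure.sum (fun g : ℕ => f g • ν.map (ins i₀ p g)) = ν := by
  have hinj : ∀ s : Finset I, Set.InjOn p ((s.erase i₀) : Set I) := by
    intro s i hi j hj hij
    have hi' : i ≠ i₀ := Finset.ne_of_mem_erase (Finset.mem_coe.1 hi)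
    have hj' : j ≠ i₀ := Finset.ne_of_mem_erase (Finset.mem_coe.1 hj)
    rw [← hu i hi', ← hu j hj', hij]
  have happ : ∀ (S : Set (I → ℕ)), MeasurableSet S →
      (Measure.sum (fun g : ℕ => f g • ν.map (ins i₀ p g))) S
        = ∑' g, f g * ν (ins i₀ p g ⁻¹' S) := by
    intro S hS
    rw [Measure.sum_apply _ hS]
    congr 1; funext g
    rw [Measure.smul_apply, Measure.map_apply (measurable_ins i₀ p g) hS, smul_eq_mul]
  have hprodcyl : ∀ (s : Finset I) (c : I → ℕ),
      ν (cyl ((s.erase i₀).image p) (fun j => c (u j))) = ∏ i ∈ s.erase i₀, f (c i) := by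
    intro s c
    rw [hcyl, Finset.prod_image (fun i hi j hj h =>
      hinj s (Finset.mem_coe.2 hi) (Finset.mem_coe.2 hj) h)]
    exact Finset.prod_congr rfl fun i hi => by rw [hu i (Finset.ne_of_mem_erase hi)]
  have hmass : (Measure.sum (fun g : ℕ => f g • ν.map (ins i₀ p g))) Set.univ = 1 := by
    rw [happ _ MeasurableSet.univ]
    simp only [Set.preimage_univ, measure_univ, mul_one, hf1]
  haveI : IsFiniteMeasure (Measure.sum (fun g : ℕ => f g • ν.map (ins i₀ p g))) :=
    ⟨by rw [hmass]; exact ENNReal.one_lt_top⟩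
  refine ext_of_generate_finite cylSet generateFrom_cylSet isPiSystem_cylSet ?_ ?_
  · rintro S ⟨s, c, rfl⟩
    rw [happ _ (measurableSet_cyl s c), hcyl]
    have hpre : ∀ g, ν (ins i₀ p g ⁻¹' cyl s c)
        = if i₀ ∈ s ∧ g ≠ c i₀ then 0 else ∏ i ∈ s.erase i₀, f (c i) := by
      intro g
      rw [ins_preimage_cyl i₀ p u hu g s c]
      split_ifs with h
      · exact measure_empty
      · exact hprodcyl s c
    by_cases hi₀ : i₀ ∈ s
    · have : ∀ g, f g * ν (ins i₀ p g ⁻¹' cyl s c)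
          = if g = c i₀ then f (c i₀) * ∏ i ∈ s.erase i₀, f (c i) else 0 := by
        intro g
        rw [hpre g]
        by_cases hg : g = c i₀
        · subst hg; simp [hi₀]
        · simp [hi₀, hg]
      rw [tsum_congr this, tsum_ite_eq, ← Finset.mul_prod_erase s _ hi₀]
    · have : ∀ g, f g * ν (ins i₀ p g ⁻¹' cyl s c)
          = f g * ∏ i ∈ s.erase i₀, f (c i) := by
        intro g; rw [hpre g, if_neg (fun h => hi₀ h.1)]
      rw [tsum_congr this, ENNReal.tsum_mul_right, hf1, one_mul,
        Finset.erase_eq_of_notMem hi₀]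
  · rw [hmass, measure_univ]
def Phi : (I → ℕ) → (ℤ → Prop) := fun x k =>
  (∃ l : ℕ, (∑ j ∈ Finset.range l, (x (Sum.inl j) : ℤ)) = k) ∨
  (∃ l : ℕ, -(∑ j ∈ Finset.range l, (x (Sum.inr j) : ℤ)) = k)

lemma measurable_Phi : Measurable Phi := by
  refine measurable_pi_lambda _ fun k => ?_
  have hs : ∀ (F : ℕ → I), ∀ l : ℕ,
      Measurable fun x : I → ℕ => ∑ j ∈ Finset.range l, (x (F j) : ℤ) := by
    intro F l
    exact Finset.measurable_sum _ fun j _ =>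
      measurable_from_nat.comp (measurable_pi_apply (F j))
  have : MeasurableSet {x : I → ℕ | Phi x k} := by
    have : {x : I → ℕ | Phi x k} =
        (⋃ l, {x : I → ℕ | (∑ j ∈ Finset.range l, (x (Sum.inl j) : ℤ)) = k}) ∪
        (⋃ l, {x : I → ℕ | -(∑ j ∈ Finset.range l, (x (Sum.inr j) : ℤ)) = k}) := by
      ext x; simp [Phi]
    rw [this]
    refine MeasurableSet.union ?_ ?_
    · exact MeasurableSet.iUnion fun l => (hs Sum.inl l) (measurableSet_singleton k)
    · exact MeasurableSet.iUnion fun l =>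
        ((hs Sum.inr l).neg) (measurableSet_singleton k)
  exact measurableSet_setOf.1 this

def pL : I → I := Sum.elim (fun n => Sum.inl (n - 1)) Sum.inr
def uL : I → I := Sum.elim (fun n => Sum.inl (n + 1)) Sum.inr
def pR : I → I := Sum.elim Sum.inl (fun n => Sum.inr (n - 1))
def uR : I → I := Sum.elim Sum.inl (fun n => Sum.inr (n + 1))

lemma huL : ∀ i : I, i ≠ Sum.inl 0 → uL (pL i) = i := by
  rintro (n | n) h
  · cases n with
    | zero => exact absurd rfl h
    | succ m => simp [pL, uL]
  · simp [pL, uL]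

lemma huR : ∀ i : I, i ≠ Sum.inr 0 → uR (pR i) = i := by
  rintro (n | n) h
  · simp [pR, uR]
  · cases n with
    | zero => exact absurd rfl h
    | succ m => simp [pR, uR]

lemma sum_ite_shift (g : ℕ) (x : ℕ → ℕ) (l : ℕ) :
    ∑ j ∈ Finset.range (l + 1), ((if j = 0 then g else x (j - 1) : ℕ) : ℤ)
      = (g : ℤ) + ∑ j ∈ Finset.range l, (x j : ℤ) := by
  rw [Finset.sum_range_succ']
  simp only [Nat.succ_ne_zero, if_false, Nat.add_sub_cancel, eq_self_iff_true, if_true]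
  ring

end TSRAux
open TSRAux in
/-- the measure `Q = Σ_{d∈ℕ₀, g∈ℕ} f(d+g) · Law(T(d,g))` on subsets of `ℤ`
(identified with `ℤ → Prop`, carrying the cylinder σ-field generated by the coordinate
events `{t | k ∈ t}`), where `T(d,g) = (d + τ^→) ∪ (−g + τ^←)` glues two independent
one-sided renewal processes, is invariant under the shift `B(t) = t + 1`. -/
theorem two_sided_renewal_shift_invariance
    {Ω : Type*} [MeasurableSpace Ω] (P : Measure Ω) [IsProbabilityMeasure P]
    -- inter-renewal times of the right and left renewal processes, jointly i.i.d.
    (ξr ξl : ℕ → Ω → ℕ)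
    (hmeas_r : ∀ j, Measurable (ξr j)) (hmeas_l : ∀ j, Measurable (ξl j))
    (hindep : iIndepFun
      (Sum.elim ξr ξl) P)
    (hid : ∀ j : ℕ ⊕ ℕ, IdentDistrib (Sum.elim ξr ξl j) (ξr 0) P P)
    (hpos : P {ω | ξr 0 ω = 0} = 0)
    -- the probability mass function `f` of the inter-renewal distribution
    (f : ℕ → ℝ≥0∞) (hf : ∀ n, f n = P {ω | ξr 0 ω = n})
    -- `T d g ω ⊆ ℤ` is `(d + τ^→(ω)) ∪ (−g + τ^←(ω))`
    (T : ℕ → ℕ → Ω → ℤ → Prop)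
    (hT : ∀ d g ω, T d g ω = fun k =>
      (∃ l : ℕ, (d : ℤ) + ∑ j ∈ Finset.range l, (ξr j ω : ℤ) = k) ∨
      (∃ l : ℕ, -(g : ℤ) - ∑ j ∈ Finset.range l, (ξl j ω : ℤ) = k))
    -- the σ-finite measure `Q(A) = Σ_{d,g} f(d+g) P(T(d,g) ∈ A)`
    (Q : Measure (ℤ → Prop))
    (hQ : Q = Measure.sum (fun dg : ℕ × ℕ =>
      f (dg.1 + dg.2 + 1) • Measure.map (T dg.1 (dg.2 + 1)) P)) :
    ∀ A : Set (ℤ → Prop), MeasurableSet A →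
      Q ((fun t : ℤ → Prop => fun k => t (k - 1)) ⁻¹' A) = Q A := by
  intro A hA
  have hBmeas : Measurable (fun t : ℤ → Prop => fun k => t (k - 1)) :=
    measurable_pi_lambda _ fun k => measurable_pi_apply (k - 1)
  set BA : Set (ℤ → Prop) := (fun t : ℤ → Prop => fun k => t (k - 1)) ⁻¹' A with hBAdef
  have hBA : MeasurableSet BA := hBmeas hA
  -- measurability of T d g
  have hTmeas : ∀ d g : ℕ, Measurable (T d g) := by
    intro d g
    refine measurable_pi_lambda _ fun k => ?_
    have h1 : ∀ l : ℕ, Measurable fun ω => (d : ℤ) + ∑ j ∈ Finset.range l, (ξr j ω : ℤ) :=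
      fun l => measurable_const.add (Finset.measurable_sum _ fun j _ =>
        measurable_from_nat.comp (hmeas_r j))
    have h2 : ∀ l : ℕ, Measurable fun ω => -(g : ℤ) - ∑ j ∈ Finset.range l, (ξl j ω : ℤ) :=
      fun l => measurable_const.sub (Finset.measurable_sum _ fun j _ =>
        measurable_from_nat.comp (hmeas_l j))
    have hms : MeasurableSet {ω | T d g ω k} := by
      have he : {ω | T d g ω k} =
          (⋃ l, {ω | (d : ℤ) + ∑ j ∈ Finset.range l, (ξr j ω : ℤ) = k}) ∪
          (⋃ l, {ω | -(g : ℤ) - ∑ j ∈ Finset.range l, (ξl j ω : ℤ) = k}) := by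
        ext ω; simp [hT]
      rw [he]
      exact (MeasurableSet.iUnion fun l => (h1 l) (measurableSet_singleton k)).union
        (MeasurableSet.iUnion fun l => (h2 l) (measurableSet_singleton k))
    exact measurableSet_setOf.1 hms
  -- the joint law ν of the gap family
  set Xseq : Ω → (I → ℕ) := fun ω i => Sum.elim ξr ξl i ω with hXdef
  have hXseq : Measurable Xseq := by
    refine measurable_pi_lambda _ fun i => ?_
    cases i with
    | inl j => exact hmeas_r j
    | inr j => exact hmeas_l j
  set ν : Measure (I → ℕ) := Measure.map Xseq P with hνdef
  haveI : IsProbabilityMeasure ν := by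
    rw [hνdef]; exact Measure.isProbabilityMeasure_map hXseq.aemeasurable
  have hf0 : f 0 = 0 := by rw [hf]; exact hpos
  have hfeq : ∀ n : ℕ, f n = P ((ξr 0) ⁻¹' {n}) := by
    intro n; rw [hf]; rfl
  have hfsum : ∑' n, f n = 1 := by
    have hd : Pairwise (Function.onFun Disjoint fun n : ℕ => (ξr 0) ⁻¹' {n}) := by
      intro m n hmn
      refine Set.disjoint_left.2 fun ω h1 h2 => hmn ?_
      simp only [Set.mem_preimage, Set.mem_singleton_iff] at h1 h2
      rw [← h1, ← h2]
    have hu : (⋃ n : ℕ, (ξr 0) ⁻¹' {n}) = Set.univ := by ext ω; simp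
    calc ∑' n, f n = ∑' n : ℕ, P ((ξr 0) ⁻¹' {n}) := tsum_congr hfeq
      _ = P (⋃ n : ℕ, (ξr 0) ⁻¹' {n}) :=
          (measure_iUnion hd fun n => (hmeas_r 0) (measurableSet_singleton n)).symm
      _ = 1 := by rw [hu, measure_univ]
  -- ν on cylinders
  have hcyl : ∀ (s : Finset I) (c : I → ℕ), ν (cyl s c) = ∏ i ∈ s, f (c i) := by
    intro s c
    rw [hνdef, Measure.map_apply hXseq (measurableSet_cyl s c)]
    have hpre : Xseq ⁻¹' cyl s c = ⋂ i ∈ s, (Sum.elim ξr ξl i) ⁻¹' {c i} := by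
      ext ω; simp [cyl, hXdef]
    rw [hpre, hindep.measure_inter_preimage_eq_mul s (sets := fun i => {c i})
      (fun i _ => measurableSet_singleton _)]
    exact Finset.prod_congr rfl fun i _ => by
      rw [(hid i).measure_mem_eq (measurableSet_singleton (c i)), ← hfeq]
  -- pointwise identities
  have hshift : ∀ (d e : ℕ) (ω : Ω),
      (fun k => T d (e + 1 + 1) ω (k - 1)) = T (d + 1) (e + 1) ω := by
    intro d e ω
    funext k
    simp only [hT]
    apply propext
    constructor
    · rintro (⟨l, h⟩ | ⟨l, h⟩)
      · exact Or.inl ⟨l, by push_cast at h ⊢; linarith⟩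
      · exact Or.inr ⟨l, by push_cast at h ⊢; linarith⟩
    · rintro (⟨l, h⟩ | ⟨l, h⟩)
      · exact Or.inl ⟨l, by push_cast at h ⊢; linarith⟩
      · exact Or.inr ⟨l, by push_cast at h ⊢; linarith⟩
  have hleft : ∀ (d : ℕ) (ω : Ω),
      (fun k => T d 1 ω (k - 1)) = Phi (ins (Sum.inl 0) pL (d + 1) (Xseq ω)) := by
    intro d ω
    have hyl : ∀ j : ℕ, (ins (Sum.inl 0) pL (d + 1) (Xseq ω)) (Sum.inl j)
        = if j = 0 then d + 1 else ξr (j - 1) ω := by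
      intro j
      cases j with
      | zero => simp [ins]
      | succ m => simp [ins, pL, hXdef]
    have hyr : ∀ j : ℕ, (ins (Sum.inl 0) pL (d + 1) (Xseq ω)) (Sum.inr j) = ξl j ω := by
      intro j; simp [ins, pL, hXdef]
    funext k
    simp only [hT, Phi, hyl, hyr]
    apply propext
    constructor
    · rintro (⟨l, h⟩ | ⟨l, h⟩)
      · refine Or.inl ⟨l + 1, ?_⟩
        rw [sum_ite_shift (d + 1) (fun m => ξr m ω) l]
        push_cast at h ⊢; linarith
      · exact Or.inr ⟨l, by push_cast at h ⊢; linarith⟩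
    · rintro (⟨l, h⟩ | ⟨l, h⟩)
      · cases l with
        | zero =>
          refine Or.inr ⟨0, ?_⟩
          simp only [Finset.range_zero, Finset.sum_empty] at h ⊢
          push_cast; linarith
        | succ m =>
          rw [sum_ite_shift (d + 1) (fun m => ξr m ω) m] at h
          refine Or.inl ⟨m, ?_⟩
          push_cast at h ⊢; linarith
      · exact Or.inr ⟨l, by push_cast at h ⊢; linarith⟩
  have hright : ∀ (e : ℕ) (ω : Ω),
      T 0 (e + 1) ω = Phi (ins (Sum.inr 0) pR (e + 1) (Xseq ω)) := by
    intro e ω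
    have hyl : ∀ j : ℕ, (ins (Sum.inr 0) pR (e + 1) (Xseq ω)) (Sum.inl j) = ξr j ω := by
      intro j; simp [ins, pR, hXdef]
    have hyr : ∀ j : ℕ, (ins (Sum.inr 0) pR (e + 1) (Xseq ω)) (Sum.inr j)
        = if j = 0 then e + 1 else ξl (j - 1) ω := by
      intro j
      cases j with
      | zero => simp [ins]
      | succ m => simp [ins, pR, hXdef]
    funext k
    simp only [hT, Phi, hyl, hyr]
    apply propext
    constructor
    · rintro (⟨l, h⟩ | ⟨l, h⟩)
      · exact Or.inl ⟨l, by push_cast at h ⊢; linarith⟩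
      · refine Or.inr ⟨l + 1, ?_⟩
        rw [sum_ite_shift (e + 1) (fun m => ξl m ω) l]
        push_cast at h ⊢; linarith
    · rintro (⟨l, h⟩ | ⟨l, h⟩)
      · exact Or.inl ⟨l, by push_cast at h ⊢; linarith⟩
      · cases l with
        | zero =>
          refine Or.inl ⟨0, ?_⟩
          simp only [Finset.range_zero, Finset.sum_empty] at h ⊢
          push_cast; linarith
        | succ m =>
          rw [sum_ite_shift (e + 1) (fun m => ξl m ω) m] at h
          exact Or.inr ⟨m, by push_cast at h ⊢; linarith⟩
  -- measure bridging
  have hS : MeasurableSet (Phi ⁻¹' A) := measurable_Phi hA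
  have happL : ∀ d : ℕ,
      (Measure.map (T d 1) P) BA = (ν.map (ins (Sum.inl 0) pL (d + 1))) (Phi ⁻¹' A) := by
    intro d
    rw [Measure.map_apply (hTmeas d 1) hBA,
      Measure.map_apply (measurable_ins _ _ _) hS, hνdef,
      Measure.map_apply hXseq ((measurable_ins _ _ _) hS)]
    congr 1
    ext ω
    rw [hBAdef]
    simp only [Set.mem_preimage]
    rw [hleft d ω]
  have happR : ∀ e : ℕ,
      (Measure.map (T 0 (e + 1)) P) A = (ν.map (ins (Sum.inr 0) pR (e + 1))) (Phi ⁻¹' A) := by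
    intro e
    rw [Measure.map_apply (hTmeas 0 (e + 1)) hA,
      Measure.map_apply (measurable_ins _ _ _) hS, hνdef,
      Measure.map_apply hXseq ((measurable_ins _ _ _) hS)]
    congr 1
    ext ω
    simp only [Set.mem_preimage]
    rw [hright e ω]
  have hML := sum_smul_map_ins ν f hfsum hcyl (Sum.inl 0) pL uL huL
  have hMR := sum_smul_map_ins ν f hfsum hcyl (Sum.inr 0) pR uR huR
  have hsum_apply : ∀ (i₀ : I) (p : I → I),
      (Measure.sum fun g : ℕ => f g • ν.map (ins i₀ p g)) (Phi ⁻¹' A)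
        = ∑' g, f g * (ν.map (ins i₀ p g)) (Phi ⁻¹' A) := by
    intro i₀ p
    rw [Measure.sum_apply _ hS]
    exact tsum_congr fun g => by rw [Measure.smul_apply, smul_eq_mul]
  -- the key exchange identity
  have key : (∑' d : ℕ, f (d + 1) * (Measure.map (T d 1) P) BA)
      = ∑' e : ℕ, f (e + 1) * (Measure.map (T 0 (e + 1)) P) A := by
    calc (∑' d : ℕ, f (d + 1) * (Measure.map (T d 1) P) BA)
        = ∑' d : ℕ, f (d + 1) * (ν.map (ins (Sum.inl 0) pL (d + 1))) (Phi ⁻¹' A) :=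
          tsum_congr fun d => by rw [happL d]
      _ = ∑' g : ℕ, f g * (ν.map (ins (Sum.inl 0) pL g)) (Phi ⁻¹' A) := by
          conv_rhs => rw [tsum_eq_zero_add' ENNReal.summable]
          rw [hf0, zero_mul, zero_add]
      _ = ν (Phi ⁻¹' A) := by rw [← hsum_apply (Sum.inl 0) pL, hML]
      _ = ∑' g : ℕ, f g * (ν.map (ins (Sum.inr 0) pR g)) (Phi ⁻¹' A) := by
          rw [← hsum_apply (Sum.inr 0) pR, hMR]
      _ = ∑' e : ℕ, f (e + 1) * (ν.map (ins (Sum.inr 0) pR (e + 1))) (Phi ⁻¹' A) := by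
          conv_lhs => rw [tsum_eq_zero_add' ENNReal.summable]
          rw [hf0, zero_mul, zero_add]
      _ = ∑' e : ℕ, f (e + 1) * (Measure.map (T 0 (e + 1)) P) A :=
          tsum_congr fun e => by rw [happR e]
  -- assemble
  rw [hQ, Measure.sum_apply _ hBA, Measure.sum_apply _ hA]
  simp only [Measure.smul_apply, smul_eq_mul]
  rw [ENNReal.tsum_prod', ENNReal.tsum_prod']
  show (∑' d : ℕ, ∑' e : ℕ, f (d + e + 1) * (Measure.map (T d (e + 1)) P) BA)
      = ∑' d : ℕ, ∑' e : ℕ, f (d + e + 1) * (Measure.map (T d (e + 1)) P) A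
  have hsplitL : ∀ d : ℕ,
      (∑' e : ℕ, f (d + e + 1) * (Measure.map (T d (e + 1)) P) BA)
        = f (d + 1) * (Measure.map (T d 1) P) BA
          + ∑' e : ℕ, f (d + e + 2) * (Measure.map (T (d + 1) (e + 1)) P) A := by
    intro d
    rw [tsum_eq_zero_add' ENNReal.summable]
    refine congrArg₂ (· + ·) (by norm_num) ?_
    refine tsum_congr fun e => ?_
    have h2 : (Measure.map (T d (e + 1 + 1)) P) BA
        = (Measure.map (T (d + 1) (e + 1)) P) A := by
      rw [Measure.map_apply (hTmeas _ _) hBA, Measure.map_apply (hTmeas _ _) hA]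
      congr 1
      ext ω
      rw [hBAdef]
      simp only [Set.mem_preimage]
      rw [hshift d e ω]
    rw [h2, show d + (e + 1) + 1 = d + e + 2 from by omega]
  have hsplitR :
      (∑' d : ℕ, ∑' e : ℕ, f (d + e + 1) * (Measure.map (T d (e + 1)) P) A)
        = (∑' e : ℕ, f (e + 1) * (Measure.map (T 0 (e + 1)) P) A)
          + ∑' d : ℕ, ∑' e : ℕ, f (d + e + 2) * (Measure.map (T (d + 1) (e + 1)) P) A := by
    rw [tsum_eq_zero_add' ENNReal.summable]
    refine congrArg₂ (· + ·) (tsum_congr fun e => by norm_num) ?_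
    refine tsum_congr fun d => tsum_congr fun e => ?_
    rw [show d + 1 + e + 1 = d + e + 2 from by omega]
  calc (∑' d : ℕ, ∑' e : ℕ, f (d + e + 1) * (Measure.map (T d (e + 1)) P) BA)
      = ∑' d : ℕ, (f (d + 1) * (Measure.map (T d 1) P) BA
          + ∑' e : ℕ, f (d + e + 2) * (Measure.map (T (d + 1) (e + 1)) P) A) :=
        tsum_congr hsplitL
    _ = (∑' d : ℕ, f (d + 1) * (Measure.map (T d 1) P) BA)
          + ∑' d : ℕ, ∑' e : ℕ, f (d + e + 2) * (Measure.map (T (d + 1) (e + 1)) P) A :=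
        ENNReal.tsum_add
    _ = (∑' e : ℕ, f (e + 1) * (Measure.map (T 0 (e + 1)) P) A)
          + ∑' d : ℕ, ∑' e : ℕ, f (d + e + 2) * (Measure.map (T (d + 1) (e + 1)) P) A := by
        rw [key]
    _ = ∑' d : ℕ, ∑' e : ℕ, f (d + e + 1) * (Measure.map (T d (e + 1)) P) A :=
        hsplitR.symm
end
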